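/- Fix an integer n ≥ 2 and a probability space (Ω, F, P). Let R_1, …, R_n be mutually independent integrable random variables with values in (−1,∞), and let F_i = σ(R_1,…,R_i). Define the (deterministic) numbers m_k = E[1+R_k] for k = 1,…,n, and a_i = 1 + Σ_{j=i+1}^n Π_{k=i+1}^j (1/m_k) for i = 1,…,n−1, with a_n = 1. Then a_i > 1 for i = 1,…,n−1 and, for every i = 1,…,n−1, E[(1+R_{i+1})/a_{i+1} | F_i] = 1/(a_i − 1) almost surely; i.e., the wealth-to-consumption factors given by discounting at the expected future returns yield a martingale consumption strategy when the returns are mutually independent. -/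

import Mathlib

open MeasureTheory

/-- The sigma-algebra `F_i = σ(R_1,…,R_i)` generated by the first `i` returns. -/
def returnFiltration {Ω : Type*} (R : ℕ → Ω → ℝ) (i : ℕ) : MeasurableSpace Ω :=
  ⨆ j ∈ Finset.Icc 1 i, MeasurableSpace.comap (R j) inferInstance

/-- When the returns `R_1,…,R_n` are mutually independent, the wealth-to-consumption
factors `a_i = 1 + Σ_{j=i+1}^n Π_{k=i+1}^j 1/m_k` obtained by discounting at the
expected gross returns `m_k = E[1+R_k]` satisfy `a_i > 1` and
`E[(1+R_{i+1})/a_{i+1} | F_i] = 1/(a_i − 1)` a.s., i.e., they yield a martingale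
consumption strategy. -/
theorem discrete_independent_returns_martingale
    {Ω : Type*} [MeasurableSpace Ω] (μ : Measure Ω) [IsProbabilityMeasure μ]
    (n : ℕ) (hn : 2 ≤ n)
    (R : ℕ → Ω → ℝ)
    (hR_meas : ∀ i, Measurable (R i))
    (hR_val : ∀ i ∈ Finset.Icc 1 n, ∀ ω, -1 < R i ω)
    (hR_int : ∀ i ∈ Finset.Icc 1 n, Integrable (R i) μ)
    (hR_indep : ProbabilityTheory.iIndepFun
      (fun j : {k : ℕ // k ∈ Finset.Icc 1 n} => R j.1) μ)
    (m : ℕ → ℝ) (hm : ∀ k, m k = ∫ ω, (1 + R k ω) ∂μ)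
    (a : ℕ → ℝ) (ha_n : a n = 1)
    (ha : ∀ i ∈ Finset.Icc 1 (n - 1),
      a i = 1 + ∑ j ∈ Finset.Icc (i + 1) n, ∏ k ∈ Finset.Icc (i + 1) j, (1 / m k)) :
    (∀ i ∈ Finset.Icc 1 (n - 1), 1 < a i) ∧
    (∀ i ∈ Finset.Icc 1 (n - 1),
      μ[fun ω => (1 + R (i + 1) ω) / a (i + 1) | returnFiltration R i]
        =ᵐ[μ] fun _ => 1 / (a i - 1)) := by
  -- positivity of m k
  have hm_pos : ∀ k ∈ Finset.Icc 1 n, 0 < m k := by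
    intro k hk
    have hint : Integrable (fun ω => 1 + R k ω) μ := (integrable_const 1).add (hR_int k hk)
    have hpos : ∀ ω, 0 < 1 + R k ω := fun ω => by have := hR_val k hk ω; linarith
    rw [hm k, integral_pos_iff_support_of_nonneg (fun ω => (hpos ω).le) hint]
    have : Function.support (fun ω => 1 + R k ω) = Set.univ := by
      ext ω; simp [(hpos ω).ne']
    rw [this]
    simp
  -- a i > 1 on 1..n-1
  have ha_gt : ∀ i ∈ Finset.Icc 1 (n - 1), 1 < a i := by
    intro i hi
    simp only [Finset.mem_Icc] at hi
    rw [ha i (Finset.mem_Icc.mpr hi)]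
    have hsum : 0 < ∑ j ∈ Finset.Icc (i + 1) n, ∏ k ∈ Finset.Icc (i + 1) j, (1 / m k) := by
      apply Finset.sum_pos
      · intro j hj
        simp only [Finset.mem_Icc] at hj
        apply Finset.prod_pos
        intro k hk
        simp only [Finset.mem_Icc] at hk
        exact one_div_pos.mpr (hm_pos k (Finset.mem_Icc.mpr ⟨by omega, by omega⟩))
      · exact Finset.nonempty_Icc.mpr (by omega)
    linarith
  -- positivity of a (i+1)
  have ha_succ_pos : ∀ i ∈ Finset.Icc 1 (n - 1), 0 < a (i + 1) := by
    intro i hi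
    simp only [Finset.mem_Icc] at hi
    by_cases h : i + 1 = n
    · have h1 := ha_n
      rw [← h] at h1
      rw [h1]; norm_num
    · have : 1 < a (i + 1) := ha_gt (i + 1) (Finset.mem_Icc.mpr ⟨by omega, by omega⟩)
      linarith
  -- key algebraic identity : a i - 1 = a (i+1) / m (i+1)
  have key : ∀ i ∈ Finset.Icc 1 (n - 1), a i - 1 = a (i + 1) / m (i + 1) := by
    intro i hi
    have hi' := hi
    simp only [Finset.mem_Icc] at hi'
    have hin : i + 1 ≤ n := by omega
    have hins : Finset.Icc (i + 1) n = insert (i + 1) (Finset.Icc (i + 2) n) := by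
      ext x; simp only [Finset.mem_Icc, Finset.mem_insert]; omega
    have hfac : ∀ j ∈ Finset.Icc (i + 1) n,
        ∏ k ∈ Finset.Icc (i + 1) j, (1 / m k)
          = (1 / m (i + 1)) * ∏ k ∈ Finset.Icc (i + 2) j, (1 / m k) := by
      intro j hj
      simp only [Finset.mem_Icc] at hj
      have : Finset.Icc (i + 1) j = insert (i + 1) (Finset.Icc (i + 2) j) := by
        ext x; simp only [Finset.mem_Icc, Finset.mem_insert]; omega
      rw [this, Finset.prod_insert (by simp)]
    have hsum : ∑ j ∈ Finset.Icc (i + 1) n, ∏ k ∈ Finset.Icc (i + 1) j, (1 / m k)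
        = (1 / m (i + 1)) *
          (1 + ∑ j ∈ Finset.Icc (i + 2) n, ∏ k ∈ Finset.Icc (i + 2) j, (1 / m k)) := by
      rw [Finset.sum_congr rfl hfac, ← Finset.mul_sum, hins,
        Finset.sum_insert (by simp)]
      have : Finset.Icc (i + 2) (i + 1) = (∅ : Finset ℕ) := by
        apply Finset.Icc_eq_empty; omega
      rw [this, Finset.prod_empty]
    have htail : 1 + ∑ j ∈ Finset.Icc (i + 2) n, ∏ k ∈ Finset.Icc (i + 2) j, (1 / m k)
        = a (i + 1) := by
      by_cases h : i + 1 = n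
      · have : Finset.Icc (i + 2) n = (∅ : Finset ℕ) := by
          apply Finset.Icc_eq_empty; omega
        have h1 := ha_n
        rw [← h] at h1
        rw [this, Finset.sum_empty, h1]; norm_num
      · exact (ha (i + 1) (Finset.mem_Icc.mpr ⟨by omega, by omega⟩)).symm
    rw [ha i hi, hsum, htail]
    ring
  refine ⟨ha_gt, fun i hi => ?_⟩
  have hi' := hi
  simp only [Finset.mem_Icc] at hi'
  have hin : i + 1 ∈ Finset.Icc 1 n := Finset.mem_Icc.mpr ⟨by omega, by omega⟩
  -- the two sigma-algebras
  have hle1 : MeasurableSpace.comap (R (i + 1)) inferInstance ≤ _ := (hR_meas (i + 1)).comap_le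
  have hle2 : returnFiltration R i ≤ (inferInstance : MeasurableSpace Ω) := by
    apply iSup₂_le
    intro j _
    exact (hR_meas j).comap_le
  haveI : SigmaFinite (μ.trim hle2) := by
    haveI : IsFiniteMeasure (μ.trim hle2) := isFiniteMeasure_trim hle2
    infer_instance
  -- independence
  have h_ii : ProbabilityTheory.iIndep
      (fun j : {k : ℕ // k ∈ Finset.Icc 1 n} =>
        MeasurableSpace.comap (R j.1) inferInstance) μ := hR_indep.iIndep
  have hST : Disjoint {j : {k : ℕ // k ∈ Finset.Icc 1 n} | j.1 = i + 1}
      {j : {k : ℕ // k ∈ Finset.Icc 1 n} | j.1 ≤ i} := by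
    rw [Set.disjoint_left]
    rintro j hj1 hj2
    simp only [Set.mem_setOf_eq] at hj1 hj2
    omega
  have hbig := ProbabilityTheory.indep_iSup_of_disjoint
    (fun j => (hR_meas j.1).comap_le) h_ii hST
  have hindep : ProbabilityTheory.Indep
      (MeasurableSpace.comap (R (i + 1)) inferInstance) (returnFiltration R i) μ := by
    refine ProbabilityTheory.indep_of_indep_of_le_right
      (ProbabilityTheory.indep_of_indep_of_le_left hbig ?_) ?_
    · exact le_iSup₂_of_le (⟨i + 1, hin⟩ : {k : ℕ // k ∈ Finset.Icc 1 n}) rfl le_rfl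
    · apply iSup₂_le
      intro j hj
      simp only [Finset.mem_Icc] at hj
      exact le_iSup₂_of_le
        (⟨j, Finset.mem_Icc.mpr ⟨hj.1, by omega⟩⟩ : {k : ℕ // k ∈ Finset.Icc 1 n})
        hj.2 le_rfl
  -- strong measurability w.r.t. mc
  have hRmc : Measurable[MeasurableSpace.comap (R (i + 1)) inferInstance] (R (i + 1)) := by
    intro s hs
    exact ⟨s, hs, rfl⟩
  have hsm : StronglyMeasurable[MeasurableSpace.comap (R (i + 1)) inferInstance]
      (fun ω => (1 + R (i + 1) ω) / a (i + 1)) :=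
    (Measurable.stronglyMeasurable ((measurable_const.add hRmc).div_const _))
  have hce := MeasureTheory.condExp_indep_eq hle1 hle2 hsm hindep
  refine hce.trans (Filter.Eventually.of_forall fun ω => ?_)
  -- compute the integral
  have hint : ∫ x, (1 + R (i + 1) x) / a (i + 1) ∂μ = m (i + 1) / a (i + 1) := by
    rw [integral_div, ← hm]
  have hmpos := hm_pos (i + 1) hin
  have hapos := ha_succ_pos i hi
  have hkey := key i hi
  simp only [hint, hkey]
  rw [one_div_div]
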